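/- In the pairing model, write F(i, j, k) = Pr(X^i > Y^j > X^k). Let i, j, k be integers with 1 ≤ i < j < k ≤ n. If F(i, j−1, k) > F(i, j, k), then F(i, j, k) > F(i, j+1, k). (Consequently, the map j ↦ F(i, j, k) on [i, k] attains its minimum at an endpoint, i.e., it is unimodal.) -/

import Mathlib

open Finset

attribute [local instance] Classical.propDecidable

set_option maxHeartbeats 1000000

/-- The `m`-th largest value among `v 0, …, v (n-1)` (with multiplicity);
equals `0` when `m > n`, matching the convention `X^m = Y^m = 0` for `m > n`. -/
noncomputable def kthLargest {n : ℕ} (v : Fin n → ℝ) (m : ℕ) : ℝ :=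
  sSup {x : ℝ | m ≤ (Finset.univ.filter (fun i => x ≤ v i)).card}

/-- The `X`-set of the assignment `σ`: for each pair `(a i, b i)`, the value `a i` if
`σ i = true`, and `b i` otherwise. -/
def Xvals {n : ℕ} (a b : Fin n → ℝ) (σ : Fin n → Bool) : Fin n → ℝ :=
  fun i => if σ i then a i else b i

/-- The `Y`-set of the assignment `σ`: the values not placed in the `X`-set. -/
def Yvals {n : ℕ} (a b : Fin n → ℝ) (σ : Fin n → Bool) : Fin n → ℝ :=
  fun i => if σ i then b i else a i

/-- `X^m` under assignment `σ`. -/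
noncomputable def XS {n : ℕ} (a b : Fin n → ℝ) (σ : Fin n → Bool) (m : ℕ) : ℝ :=
  kthLargest (Xvals a b σ) m

/-- `Y^m` under assignment `σ`. -/
noncomputable def YS {n : ℕ} (a b : Fin n → ℝ) (σ : Fin n → Bool) (m : ℕ) : ℝ :=
  kthLargest (Yvals a b σ) m

/-- The probability of an event under the uniform random assignment: each of the `n` pairs
is independently assigned with probability `1/2` each way. -/
noncomputable def Pr {n : ℕ} (E : (Fin n → Bool) → Prop) : ℝ :=
  ((Finset.univ.filter E).card : ℝ) / 2 ^ n

set_option linter.unusedSectionVars false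
set_option linter.unusedVariables false
section Rank
variable {α : Type*} [Fintype α] [DecidableEq α]

/-- number of indices with value ≥ x -/
noncomputable def cardGe (v : α → ℝ) (x : ℝ) : ℕ :=
  (Finset.univ.filter (fun q => x ≤ v q)).card

/-- the rank of q : 1 = largest -/
noncomputable def rk (v : α → ℝ) (q : α) : ℕ := cardGe v (v q)

lemma cardGe_antitone (v : α → ℝ) {x y : ℝ} (h : x ≤ y) : cardGe v y ≤ cardGe v x := by
  apply Finset.card_le_card
  intro q hq
  simp only [mem_filter, mem_univ, true_and] at hq ⊢
  linarith

lemma rk_lt_rk (v : α → ℝ) (hv : Function.Injective v) {q q' : α} (h : v q' < v q) :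
    rk v q < rk v q' := by
  have hsub : (Finset.univ.filter (fun t => v q ≤ v t)) ⊆
      (Finset.univ.filter (fun t => v q' ≤ v t)) := by
    intro t ht; simp only [mem_filter, mem_univ, true_and] at ht ⊢; linarith
  apply Finset.card_lt_card
  refine ⟨hsub, fun hsub' => ?_⟩
  have : q' ∈ (Finset.univ.filter (fun t => v q ≤ v t)) := by
    apply hsub'; simp
  simp only [mem_filter, mem_univ, true_and] at this
  linarith

lemma rk_le_iff (v : α → ℝ) (hv : Function.Injective v) {q q' : α} :
    rk v q ≤ rk v q' ↔ v q' ≤ v q := by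
  constructor
  · intro h
    by_contra hc
    push_neg at hc
    exact absurd h (Nat.not_le.2 (rk_lt_rk v hv hc))
  · intro h
    rcases eq_or_lt_of_le h with h' | h'
    · rw [hv h']
    · exact le_of_lt (rk_lt_rk v hv h')

lemma rk_lt_iff (v : α → ℝ) (hv : Function.Injective v) {q q' : α} :
    rk v q < rk v q' ↔ v q' < v q := by
  constructor
  · intro h
    by_contra hc
    push_neg at hc
    exact absurd ((rk_le_iff v hv).2 hc) (Nat.not_le.2 h)
  · exact rk_lt_rk v hv

lemma rk_injective (v : α → ℝ) (hv : Function.Injective v) : Function.Injective (rk v) := by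
  intro q q' h
  by_contra hne
  rcases lt_trichotomy (v q) (v q') with h' | h' | h'
  · exact absurd h (Nat.ne_of_gt (rk_lt_rk v hv h'))
  · exact hne (hv h')
  · exact absurd h (Nat.ne_of_lt (rk_lt_rk v hv h'))

lemma one_le_rk (v : α → ℝ) (q : α) : 1 ≤ rk v q := by
  have : q ∈ (Finset.univ.filter (fun t => v q ≤ v t)) := by simp
  have := Finset.card_pos.2 ⟨q, this⟩
  exact this

lemma rk_le_card (v : α → ℝ) (q : α) : rk v q ≤ Fintype.card α := by
  exact le_trans (Finset.card_le_card (Finset.subset_univ _)) (le_of_eq (Finset.card_univ))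

lemma rk_surj (v : α → ℝ) (hv : Function.Injective v) {m : ℕ} (h1 : 1 ≤ m)
    (h2 : m ≤ Fintype.card α) : ∃ q, rk v q = m := by
  have himg : (Finset.univ.image (rk v)) ⊆ Finset.Icc 1 (Fintype.card α) := by
    intro x hx
    simp only [Finset.mem_image] at hx
    obtain ⟨q, _, rfl⟩ := hx
    exact Finset.mem_Icc.2 ⟨one_le_rk v q, rk_le_card v q⟩
  have hcard : (Finset.univ.image (rk v)).card = Fintype.card α := by
    rw [Finset.card_image_of_injective _ (rk_injective v hv), Finset.card_univ]
  have : Finset.univ.image (rk v) = Finset.Icc 1 (Fintype.card α) := by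
    apply Finset.eq_of_subset_of_card_le himg
    rw [hcard, Nat.card_Icc]
    simp
  have hm : m ∈ Finset.univ.image (rk v) := by
    rw [this]; exact Finset.mem_Icc.2 ⟨h1, h2⟩
  simpa using hm

/-- count of elements with rank ≤ m -/
lemma card_rk_le (v : α → ℝ) (hv : Function.Injective v) {m : ℕ} (h2 : m ≤ Fintype.card α) :
    (Finset.univ.filter (fun q => rk v q ≤ m)).card = m := by
  classical
  have : (Finset.univ.filter (fun q => rk v q ≤ m)).image (rk v) = Finset.Icc 1 m := by
    apply Finset.eq_of_subset_of_card_le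
    · intro x hx
      simp only [Finset.mem_image, mem_filter] at hx
      obtain ⟨q, ⟨_, hq⟩, rfl⟩ := hx
      exact Finset.mem_Icc.2 ⟨one_le_rk v q, hq⟩
    · rw [Nat.card_Icc]
      simp only [Nat.add_sub_cancel]
      rw [Finset.card_image_of_injective _ (rk_injective v hv)]
      -- need m ≤ card of filter
      have : ∀ x, 1 ≤ x → x ≤ m → ∃ q, q ∈ Finset.univ.filter (fun q => rk v q ≤ m) ∧ rk v q = x := by
        intro x hx1 hx2
        obtain ⟨q, hq⟩ := rk_surj v hv hx1 (le_trans hx2 h2)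
        exact ⟨q, by simp [hq, hx2], hq⟩
      -- injection from Icc 1 m into the filter
      have hinj : Finset.Icc 1 m ⊆ (Finset.univ.filter (fun q => rk v q ≤ m)).image (rk v) := by
        intro x hx
        rw [Finset.mem_Icc] at hx
        obtain ⟨q, hq, rfl⟩ := this x hx.1 hx.2
        exact Finset.mem_image_of_mem _ hq
      calc m = (Finset.Icc 1 m).card := by rw [Nat.card_Icc]; simp
        _ ≤ _ := Finset.card_le_card hinj
        _ = _ := Finset.card_image_of_injective _ (rk_injective v hv)
  calc (Finset.univ.filter (fun q => rk v q ≤ m)).card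
      = ((Finset.univ.filter (fun q => rk v q ≤ m)).image (rk v)).card := by
        rw [Finset.card_image_of_injective _ (rk_injective v hv)]
    _ = m := by rw [this, Nat.card_Icc]; simp

end Rank

section Kth
variable {n : ℕ}

/-- kthLargest equals the value of the element of rank m -/
lemma kthLargest_eq_rk (v : Fin n → ℝ) (hv : Function.Injective v) {m : ℕ} (h1 : 1 ≤ m)
    {q : Fin n} (hq : rk v q = m) : kthLargest v m = v q := by
  have hmem : v q ∈ {x : ℝ | m ≤ (Finset.univ.filter (fun i => x ≤ v i)).card} := by
    simp only [Set.mem_setOf_eq]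
    rw [← hq]; exact le_refl _
  have hub : ∀ x ∈ {x : ℝ | m ≤ (Finset.univ.filter (fun i => x ≤ v i)).card}, x ≤ v q := by
    intro x hx
    simp only [Set.mem_setOf_eq] at hx
    by_contra hc
    push_neg at hc
    -- v q < x; then every i with x ≤ v i has rk < m
    have hsub : (Finset.univ.filter (fun i => x ≤ v i)) ⊆
        (Finset.univ.filter (fun i => rk v i ≤ m - 1)) := by
      intro t ht
      simp only [mem_filter, mem_univ, true_and] at ht ⊢
      have : v q < v t := lt_of_lt_of_le hc ht
      have := rk_lt_rk v hv this
      omega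
    have hle := Finset.card_le_card hsub
    have : (Finset.univ.filter (fun i => rk v i ≤ m - 1)).card ≤ m - 1 := by
      by_cases hm : m - 1 ≤ Fintype.card (Fin n)
      · rw [card_rk_le v hv hm]
      · exact le_trans (Finset.card_le_card (Finset.subset_univ _))
          (by rw [Finset.card_univ]; omega)
    omega
  exact le_antisymm (csSup_le (Set.nonempty_of_mem hmem) hub) (le_csSup ⟨v q, hub⟩ hmem)

end Kth


section Model
variable {n : ℕ} (a b : Fin n → ℝ)

/-- the slot chosen for `X` in pair `c` -/
def sX (σ : Fin n → Bool) (c : Fin n) : Fin n ⊕ Fin n := if σ c then Sum.inl c else Sum.inr c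
/-- the slot chosen for `Y` in pair `c` -/
def sY (σ : Fin n → Bool) (c : Fin n) : Fin n ⊕ Fin n := if σ c then Sum.inr c else Sum.inl c

lemma Xvals_eq (σ : Fin n → Bool) (c : Fin n) : Xvals a b σ c = Sum.elim a b (sX σ c) := by
  unfold Xvals sX; by_cases h : σ c <;> simp [h]
lemma Yvals_eq (σ : Fin n → Bool) (c : Fin n) : Yvals a b σ c = Sum.elim a b (sY σ c) := by
  unfold Yvals sY; by_cases h : σ c <;> simp [h]

lemma sX_injective (σ : Fin n → Bool) : Function.Injective (sX σ) := by
  intro c c' h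
  unfold sX at h
  by_cases h1 : σ c <;> by_cases h2 : σ c' <;> simp [h1, h2] at h <;> exact h

lemma sY_injective (σ : Fin n → Bool) : Function.Injective (sY σ) := by
  intro c c' h
  unfold sY at h
  by_cases h1 : σ c <;> by_cases h2 : σ c' <;> simp [h1, h2] at h <;> exact h

lemma sX_ne_sY (σ : Fin n → Bool) (c c' : Fin n) : sX σ c ≠ sY σ c' := by
  unfold sX sY
  by_cases h1 : σ c <;> by_cases h2 : σ c' <;> simp [h1, h2] <;> rintro rfl <;> simp_all

variable (hdistinct : Function.Injective (Sum.elim a b : Fin n ⊕ Fin n → ℝ))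
include hdistinct

lemma Xvals_injective (σ : Fin n → Bool) : Function.Injective (Xvals a b σ) := by
  intro c c' h
  rw [Xvals_eq a b, Xvals_eq a b] at h
  exact sX_injective σ (hdistinct h)

lemma Yvals_injective (σ : Fin n → Bool) : Function.Injective (Yvals a b σ) := by
  intro c c' h
  rw [Yvals_eq a b, Yvals_eq a b] at h
  exact sY_injective σ (hdistinct h)

/-- `N_p(σ)`: number of X-chosen slots among the top `p` slots globally. -/
noncomputable def NC (σ : Fin n → Bool) (p : ℕ) : ℕ :=
  (Finset.univ.filter (fun c => rk (Sum.elim a b) (sX σ c) ≤ p)).card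

lemma NC_mono (σ : Fin n → Bool) {p p' : ℕ} (h : p ≤ p') : NC a b σ p ≤ NC a b σ p' := by
  apply Finset.card_le_card
  intro c hc
  simp only [mem_filter, mem_univ, true_and] at hc ⊢
  omega

/-- split of global cardGe into X and Y parts -/
lemma cardGe_split (σ : Fin n → Bool) (x : ℝ) :
    cardGe (Sum.elim a b) x = cardGe (Xvals a b σ) x + cardGe (Yvals a b σ) x := by
  unfold cardGe
  rw [Finset.card_filter, Finset.card_filter, Finset.card_filter]
  rw [Fintype.sum_sum_type, ← Finset.sum_add_distrib, ← Finset.sum_add_distrib]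
  apply Finset.sum_congr rfl
  intro c _
  rw [Xvals_eq a b, Yvals_eq a b]
  unfold sX sY
  by_cases h : σ c <;> simp [h] <;> by_cases h1 : x ≤ a c <;> by_cases h2 : x ≤ b c <;> simp [h1, h2]

/-- NC as cardGe at global threshold -/
lemma NC_eq_cardGe (σ : Fin n → Bool) {p : ℕ} {qp : Fin n ⊕ Fin n}
    (hqp : rk (Sum.elim a b) qp = p) :
    NC a b σ p = cardGe (Xvals a b σ) (Sum.elim a b qp) := by
  unfold NC cardGe
  apply Finset.card_nbij id
  · intro c hc
    simp only [mem_coe, mem_filter, mem_univ, true_and, id] at hc ⊢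
    rw [Xvals_eq a b]
    rw [← rk_le_iff (Sum.elim a b) hdistinct, hqp]
    exact hc
  · intro c hc c' hc' h
    exact h
  · intro c hc
    refine ⟨c, ?_, rfl⟩
    simp only [Set.mem_setOf_eq, mem_coe, mem_filter, mem_univ, true_and] at hc ⊢
    rw [Xvals_eq a b, ← rk_le_iff (Sum.elim a b) hdistinct, hqp] at hc
    exact hc

/-- Main bridge: `Y^j < X^m ↔ m ≤ N_{m+j-1}` -/
lemma YS_lt_XS_iff (σ : Fin n → Bool) {m j : ℕ} (hm1 : 1 ≤ m) (hmn : m ≤ n)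
    (hj1 : 1 ≤ j) (hjn : j ≤ n) :
    (YS a b σ j < XS a b σ m ↔ m ≤ NC a b σ (m + j - 1)) := by
  have hXinj := Xvals_injective a b hdistinct σ
  have hYinj := Yvals_injective a b hdistinct σ
  set Xv := Xvals a b σ with hXv
  set Yv := Yvals a b σ with hYv
  have hcardn : Fintype.card (Fin n) = n := Fintype.card_fin n
  obtain ⟨qx, hqx⟩ := rk_surj Xv hXinj hm1 (by rw [hcardn]; exact hmn)
  obtain ⟨qy, hqy⟩ := rk_surj Yv hYinj hj1 (by rw [hcardn]; exact hjn)
  have hXS : XS a b σ m = Xv qx := kthLargest_eq_rk Xv hXinj hm1 hqx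
  have hYS : YS a b σ j = Yv qy := kthLargest_eq_rk Yv hYinj hj1 hqy
  have hs2n : m + j - 1 ≤ Fintype.card (Fin n ⊕ Fin n) := by
    simp only [Fintype.card_sum, Fintype.card_fin]; omega
  obtain ⟨qs, hqs⟩ := rk_surj (Sum.elim a b) hdistinct (m := m + j - 1) (by omega) hs2n
  have hNC := NC_eq_cardGe a b hdistinct σ hqs
  rw [← hXv] at hNC
  set xs := Sum.elim a b qs with hxs
  -- global count at threshold xs is m + j - 1
  have hglob : cardGe (Sum.elim a b) xs = m + j - 1 := hqs
  have hsplit := cardGe_split a b hdistinct σ xs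
  rw [← hXv, ← hYv] at hsplit
  -- step (a): Yv qy < Xv qx ↔ cardGe Yv (Xv qx) < j
  have stepa : (Yv qy < Xv qx) ↔ cardGe Yv (Xv qx) < j := by
    constructor
    · intro h
      have hsub : (Finset.univ.filter (fun c => Xv qx ≤ Yv c)) ⊆
          (Finset.univ.filter (fun c => rk Yv c ≤ j - 1)) := by
        intro c hc
        simp only [mem_filter, mem_univ, true_and] at hc ⊢
        have : Yv qy < Yv c := lt_of_lt_of_le h hc
        have := rk_lt_rk Yv hYinj this
        omega
      have := Finset.card_le_card hsub
      rw [card_rk_le Yv hYinj (by rw [hcardn]; omega)] at this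
      unfold cardGe
      omega
    · intro h
      by_contra hc
      push_neg at hc
      have hsub : (Finset.univ.filter (fun c => rk Yv c ≤ j)) ⊆
          (Finset.univ.filter (fun c => Xv qx ≤ Yv c)) := by
        intro c hcc
        simp only [mem_filter, mem_univ, true_and] at hcc ⊢
        rw [← hqy] at hcc
        rw [rk_le_iff Yv hYinj] at hcc
        linarith
      have := Finset.card_le_card hsub
      rw [card_rk_le Yv hYinj (by rw [hcardn]; exact hjn)] at this
      unfold cardGe at h
      omega
  -- step (b)
  rw [hXS, hYS, stepa, hNC]
  constructor
  · intro h
    -- cardGe Yv (Xv qx) < j → m ≤ cardGe Xv xs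
    rcases le_or_gt xs (Xv qx) with hcase | hcase
    · have h1 : cardGe Xv (Xv qx) ≤ cardGe Xv xs := cardGe_antitone Xv hcase
      have h2 : cardGe Xv (Xv qx) = m := hqx
      omega
    · have h1 : cardGe Yv xs ≤ cardGe Yv (Xv qx) := cardGe_antitone Yv (le_of_lt hcase)
      omega
  · intro h
    -- m ≤ cardGe Xv xs → cardGe Yv (Xv qx) < j
    have hxsle : xs ≤ Xv qx := by
      by_contra hc
      push_neg at hc
      -- qx ∉ D, so D ⊆ ranks < m
      have hsub : (Finset.univ.filter (fun c => xs ≤ Xv c)) ⊆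
          (Finset.univ.filter (fun c => rk Xv c ≤ m - 1)) := by
        intro c hcc
        simp only [mem_filter, mem_univ, true_and] at hcc ⊢
        by_contra hr
        push_neg at hr
        have hmle : rk Xv qx ≤ rk Xv c := by omega
        rw [rk_le_iff Xv hXinj] at hmle
        have : xs ≤ Xv qx := le_trans hcc hmle
        linarith
      have := Finset.card_le_card hsub
      rw [card_rk_le Xv hXinj (by rw [hcardn]; omega)] at this
      unfold cardGe at h
      omega
    have h1 : cardGe Yv (Xv qx) ≤ cardGe Yv xs := cardGe_antitone Yv hxsle
    omega

/-- X and Y order statistics are distinct values -/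
lemma XS_ne_YS (σ : Fin n → Bool) {m j : ℕ} (hm1 : 1 ≤ m) (hmn : m ≤ n)
    (hj1 : 1 ≤ j) (hjn : j ≤ n) : XS a b σ m ≠ YS a b σ j := by
  have hXinj := Xvals_injective a b hdistinct σ
  have hYinj := Yvals_injective a b hdistinct σ
  have hcardn : Fintype.card (Fin n) = n := Fintype.card_fin n
  obtain ⟨qx, hqx⟩ := rk_surj (Xvals a b σ) hXinj hm1 (by rw [hcardn]; exact hmn)
  obtain ⟨qy, hqy⟩ := rk_surj (Yvals a b σ) hYinj hj1 (by rw [hcardn]; exact hjn)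
  unfold XS YS
  rw [kthLargest_eq_rk _ hXinj hm1 hqx, kthLargest_eq_rk _ hYinj hj1 hqy]
  rw [Xvals_eq a b, Yvals_eq a b]
  intro h
  exact sX_ne_sY σ qx qy (hdistinct h)

end Model


set_option linter.unusedSectionVars false
set_option linter.unusedVariables false

lemma card_pattern (n : ℕ) (T : Finset (Fin n)) (f : Fin n → Bool) :
    (Finset.univ.filter (fun σ : Fin n → Bool => ∀ c ∈ T, σ c = f c)).card = 2 ^ (n - T.card) := by
  classical
  induction T using Finset.induction_on with
  | empty =>
    simp only [Finset.notMem_empty, false_implies, implies_true, Finset.filter_true_of_mem,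
      Finset.card_univ, Finset.card_empty, Nat.sub_zero]
    simp [Fintype.card_fun]
  | @insert a T ha IH =>
    have hcard : (insert a T).card = T.card + 1 := Finset.card_insert_of_notMem ha
    have hle : T.card + 1 ≤ n := by
      have := Finset.card_le_univ (insert a T)
      simpa [hcard] using this
    -- U = A ∪ B
    have hsplit : (Finset.univ.filter (fun σ : Fin n → Bool => ∀ c ∈ T, σ c = f c)) =
        (Finset.univ.filter (fun σ : Fin n → Bool => ∀ c ∈ insert a T, σ c = f c)) ∪
        (Finset.univ.filter (fun σ : Fin n → Bool => σ a = !(f a) ∧ ∀ c ∈ T, σ c = f c)) := by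
      ext σ
      simp only [Finset.mem_filter, Finset.mem_univ, true_and, Finset.mem_union,
        Finset.forall_mem_insert]
      constructor
      · intro h
        by_cases hσ : σ a = f a
        · exact Or.inl ⟨hσ, h⟩
        · exact Or.inr ⟨by cases hf : f a <;> cases hσ' : σ a <;> simp_all, h⟩
      · rintro (⟨_, h⟩ | ⟨_, h⟩) <;> exact h
    have hdisj : Disjoint
        (Finset.univ.filter (fun σ : Fin n → Bool => ∀ c ∈ insert a T, σ c = f c))
        (Finset.univ.filter (fun σ : Fin n → Bool => σ a = !(f a) ∧ ∀ c ∈ T, σ c = f c)) := by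
      rw [Finset.disjoint_left]
      intro σ h1 h2
      simp only [Finset.mem_filter, Finset.mem_univ, true_and, Finset.forall_mem_insert] at h1 h2
      have := h1.1
      have := h2.1
      cases hf : f a <;> simp_all
    have hbij : (Finset.univ.filter (fun σ : Fin n → Bool => ∀ c ∈ insert a T, σ c = f c)).card =
        (Finset.univ.filter (fun σ : Fin n → Bool => σ a = !(f a) ∧ ∀ c ∈ T, σ c = f c)).card := by
      refine Finset.card_bij' (fun σ _ => Function.update σ a (!(σ a)))
        (fun σ _ => Function.update σ a (!(σ a))) ?hi ?hj ?left ?right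
      case hi =>
        intro σ hσ
        simp only [Finset.mem_filter, Finset.mem_univ, true_and, Finset.forall_mem_insert] at hσ ⊢
        obtain ⟨h1, h2⟩ := hσ
        refine ⟨by simp [Function.update_self, h1], fun c hc => ?_⟩
        have hac : c ≠ a := fun h => ha (h ▸ hc)
        rw [Function.update_of_ne hac]
        exact h2 c hc
      case hj =>
        intro σ hσ
        simp only [Finset.mem_filter, Finset.mem_univ, true_and, Finset.forall_mem_insert] at hσ ⊢
        obtain ⟨h1, h2⟩ := hσ
        refine ⟨by simp [Function.update_self, h1], fun c hc => ?_⟩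
        have hac : c ≠ a := fun h => ha (h ▸ hc)
        rw [Function.update_of_ne hac]
        exact h2 c hc
      case left =>
        intro σ hσ
        funext c
        by_cases hc : c = a
        · subst hc; simp [Function.update_self]
        · simp [Function.update_of_ne hc]
      case right =>
        intro σ hσ
        funext c
        by_cases hc : c = a
        · subst hc; simp [Function.update_self]
        · simp [Function.update_of_ne hc]
    have hUcard := congrArg Finset.card hsplit
    rw [Finset.card_union_of_disjoint hdisj] at hUcard
    have h2 : 2 ^ (n - T.card) = 2 ^ (n - (T.card + 1)) * 2 := by
      have hh : n - T.card = (n - (T.card + 1)) + 1 := by clear hsplit hdisj hbij hUcard IH; omega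
      rw [hh, pow_succ]
    have hfin : (Finset.univ.filter
        (fun σ : Fin n → Bool => ∀ c ∈ insert a T, σ c = f c)).card * 2
        = 2 ^ (n - (T.card + 1)) * 2 := by
      rw [← h2, ← IH, hUcard, ← hbij]
      ring
    rw [hcard]
    exact Nat.eq_of_mul_eq_mul_right (by norm_num) hfin

lemma card_count (n : ℕ) (O : Finset (Fin n)) (hS : Fin n → Bool) (cP : Fin n)
    (hcP : cP ∉ O) (bP : Bool) (r : ℕ) :
    (Finset.univ.filter (fun σ : Fin n → Bool =>
      (O.filter (fun c => σ c = hS c)).card = r ∧ σ cP = bP)).card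
    = (O.card.choose r) * 2 ^ (n - 1 - O.card) := by
  classical
  have key : (Finset.univ.filter (fun σ : Fin n → Bool =>
      (O.filter (fun c => σ c = hS c)).card = r ∧ σ cP = bP)) =
      (O.powersetCard r).biUnion (fun K =>
        Finset.univ.filter (fun σ : Fin n → Bool => ∀ c ∈ insert cP O,
          σ c = (if c = cP then bP else if c ∈ K then hS c else !(hS c)))) := by
    ext σ
    simp only [Finset.mem_filter, Finset.mem_univ, true_and, Finset.mem_biUnion,
      Finset.mem_powersetCard]
    constructor
    · rintro ⟨hr, hb⟩
      refine ⟨O.filter (fun c => σ c = hS c), ⟨Finset.filter_subset _ _, hr⟩, ?_⟩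
      intro c hc
      rcases Finset.mem_insert.1 hc with rfl | hcO
      · simp [hb]
      · have hne : c ≠ cP := fun h => hcP (h ▸ hcO)
        simp only [hne, if_false]
        by_cases hcs : σ c = hS c
        · simp [Finset.mem_filter, hcO, hcs]
        · have : c ∉ O.filter (fun c => σ c = hS c) := by simp [Finset.mem_filter, hcs]
          simp only [this, if_false]
          cases h1 : σ c <;> cases h2 : hS c <;> simp_all
    · rintro ⟨K, ⟨hKO, hKr⟩, hpat⟩
      have hfil : O.filter (fun c => σ c = hS c) = K := by
        ext c
        simp only [Finset.mem_filter]
        constructor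
        · rintro ⟨hcO, hcs⟩
          by_contra hcK
          have := hpat c (Finset.mem_insert_of_mem hcO)
          have hne : c ≠ cP := fun h => hcP (h ▸ hcO)
          simp only [hne, if_false, hcK, if_false] at this
          rw [this] at hcs
          cases hS c <;> simp_all
        · intro hcK
          have hcO := hKO hcK
          have := hpat c (Finset.mem_insert_of_mem hcO)
          have hne : c ≠ cP := fun h => hcP (h ▸ hcO)
          simp only [hne, if_false, hcK, if_true] at this
          exact ⟨hcO, this⟩
      refine ⟨by rw [hfil]; exact hKr, ?_⟩
      have := hpat cP (Finset.mem_insert_self _ _)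
      simpa using this
  rw [key, Finset.card_biUnion]
  · have hone : ∀ K ∈ O.powersetCard r,
        (Finset.univ.filter (fun σ : Fin n → Bool => ∀ c ∈ insert cP O,
          σ c = (if c = cP then bP else if c ∈ K then hS c else !(hS c)))).card
        = 2 ^ (n - 1 - O.card) := by
      intro K hK
      rw [card_pattern]
      congr 1
      rw [Finset.card_insert_of_notMem hcP]
      omega
    rw [Finset.sum_congr rfl hone, Finset.sum_const, Finset.card_powersetCard, smul_eq_mul]
  · intro K hK K' hK' hne
    rw [Function.onFun, Finset.disjoint_left]
    intro σ h1 h2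
    simp only [Finset.mem_filter, Finset.mem_univ, true_and] at h1 h2
    rw [Finset.mem_coe, Finset.mem_powersetCard] at hK hK'
    apply hne
    ext c
    by_cases hcO : c ∈ O
    · have hp1 := h1 c (Finset.mem_insert_of_mem hcO)
      have hp2 := h2 c (Finset.mem_insert_of_mem hcO)
      have hne' : c ≠ cP := fun h => hcP (h ▸ hcO)
      simp only [hne', if_false] at hp1 hp2
      constructor
      · intro hcK
        simp only [hcK, if_true] at hp1
        by_contra hcK'
        simp only [hcK', if_false] at hp2
        rw [hp1] at hp2
        exact absurd hp2 (by cases hS c <;> simp)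
      · intro hcK'
        simp only [hcK', if_true] at hp2
        by_contra hcK
        simp only [hcK, if_false] at hp1
        rw [hp2] at hp1
        exact absurd hp1 (by cases hS c <;> simp)
    · constructor
      · intro h; exact absurd (hK.1 h) hcO
      · intro h; exact absurd (hK'.1 h) hcO


section Count
variable {n : ℕ} (a b : Fin n → ℝ)

/-- top `p` slots -/
noncomputable def TopSl (p : ℕ) : Finset (Fin n ⊕ Fin n) :=
  Finset.univ.filter (fun q => rk (Sum.elim a b) q ≤ p)

/-- number of slots of pair `c` among the top `p` -/
noncomputable def hiP (p : ℕ) (c : Fin n) : ℕ :=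
  (if Sum.inl c ∈ TopSl a b p then 1 else 0) + (if Sum.inr c ∈ TopSl a b p then 1 else 0)

/-- number of closed pairs -/
noncomputable def FcP (p : ℕ) : ℕ := (Finset.univ.filter (fun c => hiP a b p c = 2)).card
/-- straddling pairs -/
noncomputable def stradP (p : ℕ) : Finset (Fin n) := Finset.univ.filter (fun c => hiP a b p c = 1)
/-- which side of a straddling pair is high -/
noncomputable def highSP (p : ℕ) (c : Fin n) : Bool := if Sum.inl c ∈ TopSl a b p then true else false

/-- the pair of a slot -/
def piS {n : ℕ} : Fin n ⊕ Fin n → Fin n := Sum.elim id id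

lemma piS_sX {σ : Fin n → Bool} (c : Fin n) : piS (sX σ c) = c := by
  unfold sX piS
  by_cases h : σ c <;> simp [h]

lemma hi_le_two (p : ℕ) (c : Fin n) : hiP a b p c ≤ 2 := by
  unfold hiP; split <;> split <;> omega

lemma NC_decomp (σ : Fin n → Bool) (p : ℕ) :
    NC a b σ p = FcP a b p +
      ((stradP a b p).filter (fun c => σ c = highSP a b p c)).card := by
  unfold NC FcP stradP
  rw [Finset.card_filter, Finset.card_filter, Finset.card_filter, Finset.sum_filter,
    ← Finset.sum_add_distrib]
  apply Finset.sum_congr rfl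
  intro c _
  unfold hiP highSP sX TopSl
  simp only [Finset.mem_filter, Finset.mem_univ, true_and]
  by_cases h1 : rk (Sum.elim a b) (Sum.inl c) ≤ p <;>
    by_cases h2 : rk (Sum.elim a b) (Sum.inr c) ≤ p <;>
    by_cases h3 : σ c <;> simp [h1, h2, h3]

variable (hdistinct : Function.Injective (Sum.elim a b : Fin n ⊕ Fin n → ℝ))
include hdistinct

lemma card_Top {p : ℕ} (hp : p ≤ 2 * n) : (TopSl a b p).card = p := by
  unfold TopSl
  exact card_rk_le (Sum.elim a b) hdistinct (by simp [Fintype.card_sum]; omega)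

lemma sum_hi {p : ℕ} (hp : p ≤ 2 * n) : ∑ c : Fin n, hiP a b p c = p := by
  have h1 : (TopSl a b p).card = p := card_Top a b hdistinct hp
  calc ∑ c : Fin n, hiP a b p c
      = ∑ q : Fin n ⊕ Fin n, (if q ∈ TopSl a b p then 1 else 0) := by
        rw [Fintype.sum_sum_type]
        rw [← Finset.sum_add_distrib]
        rfl
    _ = (TopSl a b p).card := by
        unfold TopSl
        rw [Finset.card_filter]
        apply Finset.sum_congr rfl
        intro q _
        simp
    _ = p := h1

lemma twoF_add_G {p : ℕ} (hp : p ≤ 2 * n) :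
    2 * FcP a b p + (stradP a b p).card = p := by
  have hsum := sum_hi a b hdistinct hp
  rw [← Finset.sum_filter_add_sum_filter_not Finset.univ (fun c => hiP a b p c = 2)] at hsum
  rw [← Finset.sum_filter_add_sum_filter_not
    (Finset.univ.filter (fun c => ¬hiP a b p c = 2)) (fun c => hiP a b p c = 1)] at hsum
  have e1 : ∑ c ∈ Finset.univ.filter (fun c => hiP a b p c = 2), hiP a b p c
      = 2 * FcP a b p := by
    rw [Finset.sum_congr rfl (fun c hc => (Finset.mem_filter.1 hc).2)]
    unfold FcP
    rw [Finset.sum_const, smul_eq_mul]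
    ring
  have e2 : ∑ c ∈ (Finset.univ.filter (fun c => ¬hiP a b p c = 2)).filter
      (fun c => hiP a b p c = 1), hiP a b p c = (stradP a b p).card := by
    rw [Finset.sum_congr rfl (fun c hc => (Finset.mem_filter.1 hc).2)]
    rw [Finset.sum_const, smul_eq_mul, mul_one]
    congr 1
    unfold stradP
    rw [Finset.filter_filter]
    apply Finset.filter_congr
    intro c _
    constructor
    · rintro ⟨_, h⟩; exact h
    · intro h; exact ⟨by omega, h⟩
  have e3 : ∑ c ∈ (Finset.univ.filter (fun c => ¬hiP a b p c = 2)).filter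
      (fun c => ¬hiP a b p c = 1), hiP a b p c = 0 := by
    apply Finset.sum_eq_zero
    intro c hc
    simp only [Finset.mem_filter] at hc
    have := hi_le_two a b p c
    omega
  rw [e1, e2, e3] at hsum
  omega

variable {qp : Fin n ⊕ Fin n} {p : ℕ} (hqp : rk (Sum.elim a b) qp = p) (hp1 : 1 ≤ p)
include hqp hp1

lemma qp_not_mem_Top : qp ∉ TopSl a b (p - 1) := by
  unfold TopSl
  simp only [Finset.mem_filter, Finset.mem_univ, true_and, not_le]
  omega

lemma Top_rec : TopSl a b p = insert qp (TopSl a b (p - 1)) := by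
  ext q
  unfold TopSl
  simp only [Finset.mem_filter, Finset.mem_univ, true_and, Finset.mem_insert]
  constructor
  · intro h
    by_cases hq : rk (Sum.elim a b) q ≤ p - 1
    · right; simpa [TopSl] using hq
    · left
      apply rk_injective (Sum.elim a b) hdistinct
      omega
  · rintro (rfl | h)
    · omega
    · omega

lemma hi_rec (c : Fin n) :
    hiP a b p c = hiP a b (p - 1) c + (if c = piS qp then 1 else 0) := by
  have hT := Top_rec a b hdistinct hqp hp1
  have hnm := qp_not_mem_Top a b hdistinct hqp hp1
  unfold hiP
  rw [hT]
  rcases qp with c0 | c0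
  · simp only [piS, Sum.elim_inl, id_eq]
    by_cases hc : c = c0
    · subst hc
      simp only [Finset.mem_insert, if_pos rfl]
      have h2 : (Sum.inr c : Fin n ⊕ Fin n) ≠ Sum.inl c := by simp
      have h1 : Sum.inl c ∉ TopSl a b (p-1) := hnm
      simp [h1, h2]
      omega
    · have h1 : (Sum.inl c : Fin n ⊕ Fin n) ≠ Sum.inl c0 := by simp [hc]
      have h2 : (Sum.inr c : Fin n ⊕ Fin n) ≠ Sum.inl c0 := by simp
      simp [Finset.mem_insert, h1, h2, hc]
  · simp only [piS, Sum.elim_inr, id_eq]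
    by_cases hc : c = c0
    · subst hc
      simp only [Finset.mem_insert, if_pos rfl]
      have h2 : (Sum.inl c : Fin n ⊕ Fin n) ≠ Sum.inr c := by simp
      have h1 : Sum.inr c ∉ TopSl a b (p-1) := hnm
      simp [h1, h2]
    · have h1 : (Sum.inl c : Fin n ⊕ Fin n) ≠ Sum.inr c0 := by simp
      have h2 : (Sum.inr c : Fin n ⊕ Fin n) ≠ Sum.inr c0 := by simp [hc]
      simp [Finset.mem_insert, h1, h2, hc]

lemma hi_pred_pi_le_one : hiP a b (p - 1) (piS qp) ≤ 1 := by
  have hnm := qp_not_mem_Top a b hdistinct hqp hp1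
  rcases qp with c0 | c0
  · have hnm' : Sum.inl c0 ∉ TopSl a b (p-1) := hnm
    simp only [piS, Sum.elim_inl, id_eq]
    unfold hiP
    rw [if_neg hnm']
    split <;> omega
  · have hnm' : Sum.inr c0 ∉ TopSl a b (p-1) := hnm
    simp only [piS, Sum.elim_inr, id_eq]
    unfold hiP
    rw [if_neg hnm']
    split <;> omega

lemma Fc_rec :
    FcP a b p = FcP a b (p - 1) + (if hiP a b (p - 1) (piS qp) = 1 then 1 else 0) := by
  have hle := hi_pred_pi_le_one a b hdistinct hqp hp1
  by_cases hχ : hiP a b (p - 1) (piS qp) = 1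
  · rw [if_pos hχ]
    unfold FcP
    have : Finset.univ.filter (fun c => hiP a b p c = 2)
        = insert (piS qp) (Finset.univ.filter (fun c => hiP a b (p-1) c = 2)) := by
      ext c
      simp only [Finset.mem_filter, Finset.mem_univ, true_and, Finset.mem_insert]
      rw [hi_rec a b hdistinct hqp hp1 c]
      by_cases hc : c = piS qp
      · subst hc
        rw [if_pos rfl]
        constructor
        · intro _; exact Or.inl rfl
        · intro _; omega
      · rw [if_neg hc]
        simp [hc]
    rw [this, Finset.card_insert_of_notMem]
    simp only [Finset.mem_filter, Finset.mem_univ, true_and]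
    omega
  · rw [if_neg hχ, add_zero]
    unfold FcP
    congr 1
    ext c
    simp only [Finset.mem_filter, Finset.mem_univ, true_and]
    rw [hi_rec a b hdistinct hqp hp1 c]
    by_cases hc : c = piS qp
    · subst hc
      rw [if_pos rfl]
      constructor <;> intro h <;> omega
    · rw [if_neg hc]
      simp

lemma strad_rec_mem (c : Fin n) :
    c ∈ stradP a b p ↔ (if c = piS qp then hiP a b (p-1) c = 0 else c ∈ stradP a b (p-1)) := by
  unfold stradP
  simp only [Finset.mem_filter, Finset.mem_univ, true_and]
  rw [hi_rec a b hdistinct hqp hp1 c]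
  by_cases hc : c = piS qp
  · subst hc
    rw [if_pos rfl, if_pos rfl]
    constructor <;> intro h <;> omega
  · rw [if_neg hc, if_neg hc]
    simp


lemma NC_step (σ : Fin n → Bool) :
    NC a b σ p = NC a b σ (p - 1) + (if sX σ (piS qp) = qp then 1 else 0) := by
  unfold NC
  rw [Finset.card_filter, Finset.card_filter]
  have hsum : (∑ c : Fin n, if sX σ c = qp then 1 else 0)
      = (if sX σ (piS qp) = qp then 1 else 0) := by
    rw [Finset.sum_eq_single (piS qp)]
    · intro c _ hc
      rw [if_neg]
      intro h
      have hp := piS_sX (σ := σ) c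
      rw [h] at hp
      exact hc hp.symm
    · intro h
      exact absurd (Finset.mem_univ _) h
  rw [← hsum, ← Finset.sum_add_distrib]
  apply Finset.sum_congr rfl
  intro c _
  by_cases hc : sX σ c = qp
  · have h1 : rk (Sum.elim a b) (sX σ c) = p := by rw [hc]; exact hqp
    rw [if_pos hc, if_pos (show rk (Sum.elim a b) (sX σ c) ≤ p by omega),
      if_neg (show ¬ rk (Sum.elim a b) (sX σ c) ≤ p - 1 by omega)]
  · have hne : rk (Sum.elim a b) (sX σ c) ≠ p := by
      intro h
      exact hc (rk_injective (Sum.elim a b) hdistinct (h.trans hqp.symm))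
    rw [if_neg hc, add_zero]
    by_cases h2 : rk (Sum.elim a b) (sX σ c) ≤ p - 1
    · rw [if_pos h2, if_pos (by omega)]
    · rw [if_neg h2, if_neg (by omega)]

lemma strad_rec : stradP a b p =
    (if hiP a b (p-1) (piS qp) = 1 then (stradP a b (p-1)).erase (piS qp)
     else insert (piS qp) (stradP a b (p-1))) := by
  have hle := hi_pred_pi_le_one a b hdistinct hqp hp1
  ext c
  rw [strad_rec_mem a b hdistinct hqp hp1 c]
  by_cases hχ : hiP a b (p-1) (piS qp) = 1
  · rw [if_pos hχ, Finset.mem_erase]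
    by_cases hc : c = piS qp
    · subst hc
      rw [if_pos rfl]
      constructor
      · intro h; omega
      · rintro ⟨h, _⟩; exact absurd rfl h
    · rw [if_neg hc]
      simp [hc]
  · rw [if_neg hχ, Finset.mem_insert]
    by_cases hc : c = piS qp
    · subst hc
      rw [if_pos rfl]
      constructor
      · intro _; exact Or.inl rfl
      · intro _; omega
    · rw [if_neg hc]
      have : c ≠ piS qp := hc
      simp only [this, false_or]

lemma mem_strad_iff (c : Fin n) : c ∈ stradP a b (p-1) ↔ hiP a b (p-1) c = 1 := by
  unfold stradP
  simp

/-- The main counting formula for the increment sets. -/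
lemma Dset_card {m : ℕ} (hm : 1 ≤ m) :
    (Finset.univ.filter (fun σ : Fin n → Bool =>
        m ≤ NC a b σ p ∧ NC a b σ (p-1) < m)).card
    = if FcP a b (p-1) ≤ m - 1 then
        (((stradP a b (p-1)).erase (piS qp)).card.choose (m - 1 - FcP a b (p-1)))
          * 2 ^ (n - 1 - ((stradP a b (p-1)).erase (piS qp)).card)
      else 0 := by
  have hle := hi_pred_pi_le_one a b hdistinct hqp hp1
  set c0 := piS qp with hc0
  set O := (stradP a b (p-1)).erase c0 with hO
  have hc0O : c0 ∉ O := Finset.notMem_erase _ _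
  set bP : Bool := (if qp = Sum.inl c0 then true else false) with hbP
  have hqpc : qp = Sum.inl c0 ∨ qp = Sum.inr c0 := by
    rcases qp with c | c <;> simp [hc0, piS]
  have hsXiff : ∀ σ : Fin n → Bool, (sX σ c0 = qp ↔ σ c0 = bP) := by
    intro σ
    rcases hqpc with h | h
    · rw [hbP, if_pos h, h]
      unfold sX
      by_cases hσ : σ c0 <;> simp [hσ]
    · have hne : qp ≠ Sum.inl c0 := by rw [h]; simp
      rw [hbP, if_neg hne, h]
      unfold sX
      by_cases hσ : σ c0 <;> simp [hσ]
  by_cases hF : FcP a b (p-1) ≤ m - 1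
  · rw [if_pos hF]
    set r := m - 1 - FcP a b (p-1) with hr
    -- characterize the event
    have hev : ∀ σ : Fin n → Bool,
        (m ≤ NC a b σ p ∧ NC a b σ (p-1) < m) ↔
        ((O.filter (fun c => σ c = highSP a b (p-1) c)).card = r ∧ σ c0 = bP) := by
      intro σ
      have hstep := NC_step a b hdistinct hqp hp1 σ
      have hdec := NC_decomp a b σ (p-1)
      constructor
      · rintro ⟨h1, h2⟩
        have hchoose : sX σ c0 = qp := by
          by_contra hcon
          rw [if_neg hcon] at hstep
          omega
        have hσc0 : σ c0 = bP := (hsXiff σ).1 hchoose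
        rw [if_pos hchoose] at hstep
        refine ⟨?_, hσc0⟩
        -- NC (p-1) = m - 1
        have hNCm : NC a b σ (p-1) = m - 1 := by omega
        -- split on whether c0 is a straddler
        by_cases hχ : hiP a b (p-1) c0 = 1
        · -- c0 ∈ strad; show σ c0 ≠ highSP
          have hc0strad : c0 ∈ stradP a b (p-1) := (mem_strad_iff a b hdistinct hqp hp1 c0).2 hχ
          have hins : stradP a b (p-1) = insert c0 O := by
            rw [hO, Finset.insert_erase hc0strad]
          have hnP : ¬ (σ c0 = highSP a b (p-1) c0) := by
            have hnm := qp_not_mem_Top a b hdistinct hqp hp1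
            rcases hqpc with hq | hq
            · -- qp = inl c0 : bP = true, highSP = false
              have hbPt : bP = true := by rw [hbP, if_pos hq]
              have hhS : highSP a b (p-1) c0 = false := by
                unfold highSP
                rw [if_neg (by rw [← hq]; exact hnm)]
              rw [hσc0, hbPt, hhS]
              simp
            · -- qp = inr c0 : bP = false, highSP = true
              have hbPf : bP = false := by
                rw [hbP, if_neg (by rw [hq]; simp)]
              have hinr : Sum.inr c0 ∉ TopSl a b (p-1) := by rw [← hq]; exact hnm
              have hinl : Sum.inl c0 ∈ TopSl a b (p-1) := by
                by_contra hcon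
                unfold hiP at hχ
                rw [if_neg hcon, if_neg hinr] at hχ
                omega
              have hhS : highSP a b (p-1) c0 = true := by
                unfold highSP
                rw [if_pos hinl]
              rw [hσc0, hbPf, hhS]
              simp
          rw [hins, Finset.filter_insert, if_neg hnP] at hdec
          omega
        · -- c0 ∉ strad
          have hc0n : c0 ∉ stradP a b (p-1) := by
            rw [mem_strad_iff a b hdistinct hqp hp1]
            exact hχ
          have heq : O = stradP a b (p-1) := by
            rw [hO, Finset.erase_eq_of_notMem hc0n]
          rw [heq]
          omega
      · rintro ⟨h1, h2⟩
        have hchoose : sX σ c0 = qp := (hsXiff σ).2 h2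
        rw [if_pos hchoose] at hstep
        -- need NC (p-1) = m - 1
        have hNCm : NC a b σ (p-1) = m - 1 := by
          by_cases hχ : hiP a b (p-1) c0 = 1
          · have hc0strad : c0 ∈ stradP a b (p-1) := (mem_strad_iff a b hdistinct hqp hp1 c0).2 hχ
            have hins : stradP a b (p-1) = insert c0 O := by
              rw [hO, Finset.insert_erase hc0strad]
            have hnP : ¬ (σ c0 = highSP a b (p-1) c0) := by
              have hnm := qp_not_mem_Top a b hdistinct hqp hp1
              rcases hqpc with hq | hq
              · have hbPt : bP = true := by rw [hbP, if_pos hq]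
                have hhS : highSP a b (p-1) c0 = false := by
                  unfold highSP
                  rw [if_neg (by rw [← hq]; exact hnm)]
                rw [h2, hbPt, hhS]
                simp
              · have hbPf : bP = false := by
                  rw [hbP, if_neg (by rw [hq]; simp)]
                have hinr : Sum.inr c0 ∉ TopSl a b (p-1) := by rw [← hq]; exact hnm
                have hinl : Sum.inl c0 ∈ TopSl a b (p-1) := by
                  by_contra hcon
                  unfold hiP at hχ
                  rw [if_neg hcon, if_neg hinr] at hχ
                  omega
                have hhS : highSP a b (p-1) c0 = true := by
                  unfold highSP
                  rw [if_pos hinl]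
                rw [h2, hbPf, hhS]
                simp
            rw [hins, Finset.filter_insert, if_neg hnP] at hdec
            omega
          · have hc0n : c0 ∉ stradP a b (p-1) := by
              rw [mem_strad_iff a b hdistinct hqp hp1]
              exact hχ
            have heq : O = stradP a b (p-1) := by
              rw [hO, Finset.erase_eq_of_notMem hc0n]
            rw [← heq] at hdec
            omega
        omega
    have : (Finset.univ.filter (fun σ : Fin n → Bool =>
        m ≤ NC a b σ p ∧ NC a b σ (p-1) < m)) =
        (Finset.univ.filter (fun σ : Fin n → Bool =>
        (O.filter (fun c => σ c = highSP a b (p-1) c)).card = r ∧ σ c0 = bP)) := by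
      apply Finset.filter_congr
      intro σ _
      exact hev σ
    rw [this]
    exact card_count n O (highSP a b (p-1)) c0 hc0O bP r
  · rw [if_neg hF]
    rw [Finset.card_eq_zero, Finset.filter_eq_empty_iff]
    intro σ _
    rintro ⟨h1, h2⟩
    have hdec := NC_decomp a b σ (p-1)
    omega

end Count

section Binom

lemma choose_succ_ge (G r : ℕ) (h : 2*r + 1 ≤ G) : G.choose r ≤ G.choose (r+1) := by
  have hkey := Nat.choose_succ_right_eq G r
  have h1 : G.choose r * (r+1) ≤ G.choose r * (G - r) := by
    apply Nat.mul_le_mul_left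
    omega
  rw [← hkey] at h1
  exact Nat.le_of_mul_le_mul_right h1 (by omega)

lemma choose_succ_le (G r : ℕ) (h : G ≤ 2*r + 1) : G.choose (r+1) ≤ G.choose r := by
  have hkey := Nat.choose_succ_right_eq G r
  have h1 : G.choose r * (G - r) ≤ G.choose r * (r+1) := by
    apply Nat.mul_le_mul_left
    omega
  rw [← hkey] at h1
  exact Nat.le_of_mul_le_mul_right h1 (by omega)

lemma pow_split (N g : ℕ) (h : g + 1 ≤ N) : 2^(N - g) = 2^(N - (g+1)) * 2 := by
  rw [← pow_succ]
  congr 1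
  omega

lemma binA (g r N : ℕ) (hg : g + 1 ≤ N) (hr : 2*r ≤ g + 1) :
    (g+1).choose r * 2^(N - (g+1)) ≤ g.choose r * 2^(N - g) := by
  rw [pow_split N g hg]
  rcases r with _ | r''
  · simp
  · rw [Nat.choose_succ_succ]
    have h1 : g.choose r'' ≤ g.choose (r''+1) := choose_succ_ge g r'' (by omega)
    calc (g.choose r'' + g.choose (r''+1)) * 2^(N-(g+1))
        ≤ (g.choose (r''+1) + g.choose (r''+1)) * 2^(N-(g+1)) := by
          apply Nat.mul_le_mul_right
          omega
      _ = g.choose (r''+1) * (2^(N-(g+1)) * 2) := by ring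

lemma binB (g r N : ℕ) (hr1 : 1 ≤ r) (hr : 2*r ≤ g + 1) (E : ℕ) :
    g.choose (r-1) * E ≤ g.choose r * E := by
  apply Nat.mul_le_mul_right
  have := choose_succ_ge g (r-1) (by omega)
  have hrr : r - 1 + 1 = r := by omega
  rw [hrr] at this
  exact this

lemma binC (g r N : ℕ) (hg : g ≤ N) (hg1 : 1 ≤ g) (hr1 : 1 ≤ r) (hr : 2*r ≤ g) :
    (g-1).choose (r-1) * 2^(N - (g-1)) ≤ g.choose r * 2^(N - g) := by
  have hgg : g - 1 + 1 = g := by omega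
  have hsp : 2^(N - (g-1)) = 2^(N - g) * 2 := by
    rw [← pow_succ]
    congr 1
    omega
  rw [hsp]
  have hpas : g.choose r = (g-1).choose (r-1) + (g-1).choose r := by
    have := Nat.choose_succ_succ (g-1) (r-1)
    simp only [Nat.succ_eq_add_one] at this
    rw [hgg] at this
    have hrr : r - 1 + 1 = r := by omega
    rw [hrr] at this
    exact this
  have h1 : (g-1).choose (r-1) ≤ (g-1).choose r := by
    have := choose_succ_ge (g-1) (r-1) (by omega)
    have hrr : r - 1 + 1 = r := by omega
    rw [hrr] at this
    exact this
  calc (g-1).choose (r-1) * (2^(N-g) * 2)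
      = ((g-1).choose (r-1) + (g-1).choose (r-1)) * 2^(N-g) := by ring
    _ ≤ ((g-1).choose (r-1) + (g-1).choose r) * 2^(N-g) := by
        apply Nat.mul_le_mul_right
        omega
    _ = g.choose r * 2^(N-g) := by rw [← hpas]

lemma binA' (g r N : ℕ) (hg : g + 1 ≤ N) (hr1 : 1 ≤ r) (hr : g + 1 ≤ 2*r) :
    g.choose r * 2^(N - g) ≤ (g+1).choose r * 2^(N - (g+1)) := by
  rw [pow_split N g hg]
  rcases r with _ | r''
  · omega
  · rw [Nat.choose_succ_succ]
    have h1 : g.choose (r''+1) ≤ g.choose r'' := choose_succ_le g r'' (by omega)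
    calc g.choose (r''+1) * (2^(N-(g+1)) * 2)
        = (g.choose (r''+1) + g.choose (r''+1)) * 2^(N-(g+1)) := by ring
      _ ≤ (g.choose r'' + g.choose (r''+1)) * 2^(N-(g+1)) := by
          apply Nat.mul_le_mul_right
          omega

lemma binB' (g r N : ℕ) (hr1 : 1 ≤ r) (hr : g ≤ 2*r - 1) (E : ℕ) :
    g.choose r * E ≤ g.choose (r-1) * E := by
  apply Nat.mul_le_mul_right
  have := choose_succ_le g (r-1) (by omega)
  have hrr : r - 1 + 1 = r := by omega
  rw [hrr] at this
  exact this

lemma binC' (g r N : ℕ) (hg : g ≤ N) (hg1 : 1 ≤ g) (hr1 : 1 ≤ r) (hr : g ≤ 2*r) :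
    g.choose r * 2^(N - g) ≤ (g-1).choose (r-1) * 2^(N - (g-1)) := by
  have hgg : g - 1 + 1 = g := by omega
  have hsp : 2^(N - (g-1)) = 2^(N - g) * 2 := by
    rw [← pow_succ]
    congr 1
    omega
  rw [hsp]
  have hpas : g.choose r = (g-1).choose (r-1) + (g-1).choose r := by
    have := Nat.choose_succ_succ (g-1) (r-1)
    simp only [Nat.succ_eq_add_one] at this
    rw [hgg] at this
    have hrr : r - 1 + 1 = r := by omega
    rw [hrr] at this
    exact this
  have h1 : (g-1).choose r ≤ (g-1).choose (r-1) := by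
    have := choose_succ_le (g-1) (r-1) (by omega)
    have hrr : r - 1 + 1 = r := by omega
    rw [hrr] at this
    exact this
  calc g.choose r * 2^(N-g)
      = ((g-1).choose (r-1) + (g-1).choose r) * 2^(N-g) := by rw [← hpas]
    _ ≤ ((g-1).choose (r-1) + (g-1).choose (r-1)) * 2^(N-g) := by
        apply Nat.mul_le_mul_right
        omega
    _ = (g-1).choose (r-1) * (2^(N-g) * 2) := by ring

end Binom

lemma erase_card_le (n : ℕ) (s : Finset (Fin n)) (c : Fin n) : (s.erase c).card ≤ n - 1 := by
  have h1 : s.erase c ⊆ Finset.univ.erase c := by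
    apply Finset.erase_subset_erase
    exact Finset.subset_univ s
  have h2 := Finset.card_le_card h1
  rw [Finset.card_erase_of_mem (Finset.mem_univ c), Finset.card_univ, Fintype.card_fin] at h2
  exact h2

section QM
variable {n : ℕ} (a b : Fin n → ℝ)

lemma NC_mono' (σ : Fin n → Bool) {p p' : ℕ} (h : p ≤ p') : NC a b σ p ≤ NC a b σ p' := by
  apply Finset.card_le_card
  intro c hc
  simp only [Finset.mem_filter, Finset.mem_univ, true_and] at hc ⊢
  omega

/-- `Q(m,p)`: number of assignments with at least `m` X's among the top `p` slots -/
noncomputable def Qn (m p : ℕ) : ℕ :=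
  (Finset.univ.filter (fun σ : Fin n → Bool => m ≤ NC a b σ p)).card

/-- increment set cardinality -/
noncomputable def Dn (m p : ℕ) : ℕ :=
  (Finset.univ.filter (fun σ : Fin n → Bool =>
    m ≤ NC a b σ p ∧ NC a b σ (p-1) < m)).card

lemma Q_split (m p : ℕ) (hp1 : 1 ≤ p) : Qn a b m p = Qn a b m (p-1) + Dn a b m p := by
  unfold Qn Dn
  have hsplit : (Finset.univ.filter (fun σ : Fin n → Bool => m ≤ NC a b σ p)) =
      (Finset.univ.filter (fun σ : Fin n → Bool => m ≤ NC a b σ (p-1))) ∪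
      (Finset.univ.filter (fun σ : Fin n → Bool =>
        m ≤ NC a b σ p ∧ NC a b σ (p-1) < m)) := by
    ext σ
    simp only [Finset.mem_filter, Finset.mem_univ, true_and, Finset.mem_union]
    have := NC_mono' a b σ (show p - 1 ≤ p by omega)
    omega
  have hdisj : Disjoint
      (Finset.univ.filter (fun σ : Fin n → Bool => m ≤ NC a b σ (p-1)))
      (Finset.univ.filter (fun σ : Fin n → Bool =>
        m ≤ NC a b σ p ∧ NC a b σ (p-1) < m)) := by
    rw [Finset.disjoint_left]
    intro σ h1 h2
    simp only [Finset.mem_filter, Finset.mem_univ, true_and] at h1 h2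
    omega
  rw [hsplit, Finset.card_union_of_disjoint hdisj]

variable (hdistinct : Function.Injective (Sum.elim a b : Fin n ⊕ Fin n → ℝ))
include hdistinct

lemma M1 {m p : ℕ} (hm : 1 ≤ m) (hp : 2*m ≤ p) (hp2 : p + 1 ≤ 2*n) :
    Dn a b m (p+1) ≤ Dn a b m p := by
  have hcard2n : Fintype.card (Fin n ⊕ Fin n) = 2 * n := by
    simp [Fintype.card_sum]; ring
  obtain ⟨qp, hqp⟩ := rk_surj (Sum.elim a b) hdistinct (m := p)
    (by omega) (by omega)
  obtain ⟨qp', hqp'⟩ := rk_surj (Sum.elim a b) hdistinct (m := p+1)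
    (by omega) (by omega)
  have hD1 : Dn a b m p = _ := Dset_card a b hdistinct hqp (by omega) hm
  have hD2 : Dn a b m (p+1) = _ := Dset_card a b hdistinct hqp' (by omega) hm
  simp only [Nat.add_sub_cancel] at hD2
  rw [hD1, hD2]
  -- names
  set c0 := piS qp with hc0def
  set c0' := piS qp' with hc0'def
  set S1 := stradP a b (p-1) with hS1
  set F1 := FcP a b (p-1) with hF1
  set F2 := FcP a b p with hF2
  set G1 := (S1.erase c0).card with hG1
  set G2 := ((stradP a b p).erase c0').card with hG2
  -- relations
  have hχle := hi_pred_pi_le_one a b hdistinct hqp (by omega)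
  have hrecF : F2 = F1 + (if hiP a b (p-1) c0 = 1 then 1 else 0) :=
    Fc_rec a b hdistinct hqp (by omega)
  have hrecS : stradP a b p =
      (if hiP a b (p-1) c0 = 1 then S1.erase c0 else insert c0 S1) :=
    strad_rec a b hdistinct hqp (by omega)
  have hpar : 2 * F1 + S1.card = p - 1 := by
    have := twoF_add_G a b hdistinct (p := p - 1) (by omega)
    rw [← hS1, ← hF1] at this
    exact this
  have hG1n : G1 ≤ n - 1 := erase_card_le n _ _
  have hG2n : G2 ≤ n - 1 := erase_card_le n _ _
  by_cases hF : F1 ≤ m - 1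
  · rw [if_pos hF]
    by_cases hχ : hiP a b (p-1) c0 = 1
    · -- χ = 1
      rw [if_pos hχ] at hrecS
      have hc0S1 : c0 ∈ S1 := by
        rw [hS1, mem_strad_iff a b hdistinct hqp (by omega)]
        exact hχ
      have hG1v : G1 + 1 = S1.card := by
        rw [hG1, Finset.card_erase_of_mem hc0S1]
        omega
      have hF2v : F2 = F1 + 1 := by rw [hrecF, if_pos hχ]
      by_cases hF' : F2 ≤ m - 1
      · rw [if_pos hF']
        -- r' = r - 1  where r = m-1-F1 ≥ 1
        set r := m - 1 - F1 with hr
        have hr1 : 1 ≤ r := by omega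
        have hr2 : m - 1 - F2 = r - 1 := by omega
        rw [hF2v]
        have hcards2 : (stradP a b p).card = G1 := by
          rw [hrecS, ← hG1]
        have hparity : G1 = 2*r + (p - 2*m) := by omega
        by_cases hχ' : c0' ∈ stradP a b p
        · -- G2 = G1 - 1
          have hG2v : G2 + 1 = G1 := by
            rw [hG2, Finset.card_erase_of_mem hχ']
            have : 1 ≤ (stradP a b p).card := Finset.card_pos.2 ⟨c0', hχ'⟩
            omega
          have hG11 : 1 ≤ G1 := by omega
          have hG2eq : G2 = G1 - 1 := by omega
          rw [hG2eq]
          have hrr : m - 1 - (F1 + 1) = r - 1 := by omega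
          rw [hrr]
          exact binC G1 r (n-1) (by omega) hG11 hr1 (by omega)
        · -- G2 = G1
          have hG2v : G2 = G1 := by
            rw [hG2, Finset.erase_eq_of_notMem hχ', hcards2]
          have hrr : m - 1 - (F1 + 1) = r - 1 := by omega
          rw [hG2v, hrr]
          exact binB G1 r (n-1) hr1 (by omega) _
      · rw [if_neg hF']
        omega
    · -- χ = 0
      rw [if_neg hχ] at hrecS
      have hc0S1 : c0 ∉ S1 := by
        rw [hS1, mem_strad_iff a b hdistinct hqp (by omega)]
        exact hχ
      have hG1v : G1 = S1.card := by
        rw [hG1, Finset.erase_eq_of_notMem hc0S1]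
      have hF2v : F2 = F1 := by rw [hrecF, if_neg hχ]; omega
      have hF' : F2 ≤ m - 1 := by omega
      rw [if_pos hF', hF2v]
      set r := m - 1 - F1 with hr
      have hcards2 : (stradP a b p).card = G1 + 1 := by
        rw [hrecS, Finset.card_insert_of_notMem hc0S1, hG1v]
      have hparity : G1 = 2*r + (p + 1 - 2*m) := by omega
      by_cases hχ' : c0' ∈ stradP a b p
      · have hG2v : G2 + 1 = G1 + 1 := by
          rw [hG2, Finset.card_erase_of_mem hχ']
          have : 1 ≤ (stradP a b p).card := Finset.card_pos.2 ⟨c0', hχ'⟩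
          omega
        have : G2 = G1 := by omega
        rw [this]
      · have hG2v : G2 = G1 + 1 := by
          rw [hG2, Finset.erase_eq_of_notMem hχ', hcards2]
        rw [hG2v]
        exact binA G1 r (n-1) (by omega) (by omega)
  · rw [if_neg hF]
    have hF2ge : F1 ≤ F2 := by
      rw [hrecF]
      omega
    rw [if_neg (by omega)]

lemma M2 {m p : ℕ} (hm : 1 ≤ m) (hp1 : 1 ≤ p) (hp : p + 2 ≤ 2*m) (hp2 : p + 1 ≤ 2*n) :
    Dn a b m p ≤ Dn a b m (p+1) := by
  obtain ⟨qp, hqp⟩ := rk_surj (Sum.elim a b) hdistinct (m := p)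
    (by omega) (by simp [Fintype.card_sum]; omega)
  obtain ⟨qp', hqp'⟩ := rk_surj (Sum.elim a b) hdistinct (m := p+1)
    (by omega) (by simp [Fintype.card_sum]; omega)
  have hD1 : Dn a b m p = _ := Dset_card a b hdistinct hqp (by omega) hm
  have hD2 : Dn a b m (p+1) = _ := Dset_card a b hdistinct hqp' (by omega) hm
  simp only [Nat.add_sub_cancel] at hD2
  rw [hD1, hD2]
  set c0 := piS qp with hc0def
  set c0' := piS qp' with hc0'def
  set S1 := stradP a b (p-1) with hS1
  set F1 := FcP a b (p-1) with hF1
  set F2 := FcP a b p with hF2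
  set G1 := (S1.erase c0).card with hG1
  set G2 := ((stradP a b p).erase c0').card with hG2
  have hχle := hi_pred_pi_le_one a b hdistinct hqp (by omega)
  have hrecF : F2 = F1 + (if hiP a b (p-1) c0 = 1 then 1 else 0) :=
    Fc_rec a b hdistinct hqp (by omega)
  have hrecS : stradP a b p =
      (if hiP a b (p-1) c0 = 1 then S1.erase c0 else insert c0 S1) :=
    strad_rec a b hdistinct hqp (by omega)
  have hpar : 2 * F1 + S1.card = p - 1 := by
    have := twoF_add_G a b hdistinct (p := p - 1) (by omega)
    rw [← hS1, ← hF1] at this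
    exact this
  have hG1n : G1 ≤ n - 1 := erase_card_le n _ _
  have hG2n : G2 ≤ n - 1 := erase_card_le n _ _
  by_cases hF : F1 ≤ m - 1
  · rw [if_pos hF]
    set r := m - 1 - F1 with hr
    by_cases hχ : hiP a b (p-1) c0 = 1
    · -- χ = 1 : G1 = S1.card - 1, need r ≥ 1
      rw [if_pos hχ] at hrecS
      have hc0S1 : c0 ∈ S1 := by
        rw [hS1, mem_strad_iff a b hdistinct hqp (by omega)]
        exact hχ
      have hG1v : G1 + 1 = S1.card := by
        rw [hG1, Finset.card_erase_of_mem hc0S1]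
        have : 1 ≤ S1.card := Finset.card_pos.2 ⟨c0, hc0S1⟩
        omega
      have hF2v : F2 = F1 + 1 := by rw [hrecF, if_pos hχ]
      -- parity: G1 + 1 + 2F1 = p-1 ⇒ G1 = 2r - (2m - p) with 2m ≥ p+2 ⇒ G1 ≤ 2r-2, r ≥ 1
      have hparity : G1 + 1 + (2*m - p) = 2*r + 1 := by omega
      have hr1 : 1 ≤ r := by omega
      have hF' : F2 ≤ m - 1 := by omega
      rw [if_pos hF', hF2v]
      have hrr : m - 1 - (F1 + 1) = r - 1 := by omega
      rw [hrr]
      have hcards2 : (stradP a b p).card = G1 := by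
        rw [hrecS, ← hG1]
      by_cases hχ' : c0' ∈ stradP a b p
      · have hG2v : G2 + 1 = G1 := by
          rw [hG2, Finset.card_erase_of_mem hχ']
          have : 1 ≤ (stradP a b p).card := Finset.card_pos.2 ⟨c0', hχ'⟩
          omega
        have hG11 : 1 ≤ G1 := by omega
        have hG2eq : G2 = G1 - 1 := by omega
        rw [hG2eq]
        exact binC' G1 r (n-1) (by omega) hG11 hr1 (by omega)
      · have hG2v : G2 = G1 := by
          rw [hG2, Finset.erase_eq_of_notMem hχ', hcards2]
        rw [hG2v]
        exact binB' G1 r (n-1) hr1 (by omega) _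
    · -- χ = 0
      rw [if_neg hχ] at hrecS
      have hc0S1 : c0 ∉ S1 := by
        rw [hS1, mem_strad_iff a b hdistinct hqp (by omega)]
        exact hχ
      have hG1v : G1 = S1.card := by
        rw [hG1, Finset.erase_eq_of_notMem hc0S1]
      have hF2v : F2 = F1 := by rw [hrecF, if_neg hχ]; omega
      have hF' : F2 ≤ m - 1 := by omega
      rw [if_pos hF', hF2v]
      have hparity : G1 + (2*m - p - 1) = 2*r := by omega
      have hr1 : 1 ≤ r := by omega
      have hcards2 : (stradP a b p).card = G1 + 1 := by
        rw [hrecS, Finset.card_insert_of_notMem hc0S1, hG1v]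
      by_cases hχ' : c0' ∈ stradP a b p
      · have hG2v : G2 + 1 = G1 + 1 := by
          rw [hG2, Finset.card_erase_of_mem hχ']
          have : 1 ≤ (stradP a b p).card := Finset.card_pos.2 ⟨c0', hχ'⟩
          omega
        have : G2 = G1 := by omega
        rw [this]
      · have hG2v : G2 = G1 + 1 := by
          rw [hG2, Finset.erase_eq_of_notMem hχ', hcards2]
        rw [hG2v]
        exact binA' G1 r (n-1) (by omega) hr1 (by omega)
  · rw [if_neg hF]
    omega

end QM


section Final
variable {n : ℕ} (a b : Fin n → ℝ)
variable (hdistinct : Function.Injective (Sum.elim a b : Fin n ⊕ Fin n → ℝ))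
include hdistinct

lemma NC_diff (σ : Fin n → Bool) {s t : ℕ} (hst : s ≤ t) (ht : t ≤ 2*n) :
    NC a b σ t ≤ NC a b σ s + (t - s) := by
  have hcard2n : (2 : ℕ) * n ≤ Fintype.card (Fin n ⊕ Fin n) := by
    simp [Fintype.card_sum]
    omega
  unfold NC
  have hsub : (Finset.univ.filter (fun c => rk (Sum.elim a b) (sX σ c) ≤ t)) ⊆
      (Finset.univ.filter (fun c => rk (Sum.elim a b) (sX σ c) ≤ s)) ∪
      (Finset.univ.filter (fun c => s < rk (Sum.elim a b) (sX σ c) ∧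
        rk (Sum.elim a b) (sX σ c) ≤ t)) := by
    intro c hc
    simp only [Finset.mem_filter, Finset.mem_univ, true_and, Finset.mem_union] at hc ⊢
    omega
  have hinj : ((Finset.univ.filter (fun c => s < rk (Sum.elim a b) (sX σ c) ∧
      rk (Sum.elim a b) (sX σ c) ≤ t))).card ≤ t - s := by
    have hmaps : ∀ c ∈ (Finset.univ.filter (fun c => s < rk (Sum.elim a b) (sX σ c) ∧
        rk (Sum.elim a b) (sX σ c) ≤ t)), sX σ c ∈
        (Finset.univ.filter (fun q => s < rk (Sum.elim a b) q ∧ rk (Sum.elim a b) q ≤ t)) := by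
      intro c hc
      simp only [Finset.mem_filter, Finset.mem_univ, true_and] at hc ⊢
      exact hc
    have h1 := Finset.card_le_card_of_injOn (sX σ) hmaps
      (fun c _ c' _ h => sX_injective σ h)
    have h2 : (Finset.univ.filter (fun q => s < rk (Sum.elim a b) q ∧
        rk (Sum.elim a b) q ≤ t)).card = t - s := by
      have hsplit : (Finset.univ.filter (fun q => rk (Sum.elim a b) q ≤ t)) =
          (Finset.univ.filter (fun q => rk (Sum.elim a b) q ≤ s)) ∪
          (Finset.univ.filter (fun q => s < rk (Sum.elim a b) q ∧
            rk (Sum.elim a b) q ≤ t)) := by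
        ext q
        simp only [Finset.mem_filter, Finset.mem_univ, true_and, Finset.mem_union]
        omega
      have hdisj : Disjoint
          (Finset.univ.filter (fun q => rk (Sum.elim a b) q ≤ s))
          (Finset.univ.filter (fun q => s < rk (Sum.elim a b) q ∧
            rk (Sum.elim a b) q ≤ t)) := by
        rw [Finset.disjoint_left]
        intro q h1 h2
        simp only [Finset.mem_filter, Finset.mem_univ, true_and] at h1 h2
        omega
      have hct := card_rk_le (Sum.elim a b) hdistinct (m := t) (by omega)
      have hcs := card_rk_le (Sum.elim a b) hdistinct (m := s) (by omega)
      have := congrArg Finset.card hsplit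
      rw [Finset.card_union_of_disjoint hdisj, hct, hcs] at this
      omega
    omega
  calc (Finset.univ.filter (fun c => rk (Sum.elim a b) (sX σ c) ≤ t)).card
      ≤ ((Finset.univ.filter (fun c => rk (Sum.elim a b) (sX σ c) ≤ s)) ∪
        (Finset.univ.filter (fun c => s < rk (Sum.elim a b) (sX σ c) ∧
          rk (Sum.elim a b) (sX σ c) ≤ t))).card := Finset.card_le_card hsub
    _ ≤ _ + _ := Finset.card_union_le _ _
    _ ≤ _ := by omega

lemma event_card {i j' k : ℕ} (hi1 : 1 ≤ i) (hik : i < k) (hkn : k ≤ n)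
    (hj1 : 1 ≤ j') (hjn : j' ≤ n) :
    (Finset.univ.filter (fun σ : Fin n → Bool =>
      XS a b σ k < YS a b σ j' ∧ YS a b σ j' < XS a b σ i)).card + Qn a b k (j'+k-1)
    = Qn a b i (i+j'-1) := by
  have hiff : ∀ σ : Fin n → Bool,
      (XS a b σ k < YS a b σ j' ∧ YS a b σ j' < XS a b σ i)
      ↔ (i ≤ NC a b σ (i+j'-1) ∧ NC a b σ (j'+k-1) < k) := by
    intro σ
    have h1 := YS_lt_XS_iff a b hdistinct σ (m := i) (j := j') hi1 (by omega) hj1 hjn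
    have h2 := YS_lt_XS_iff a b hdistinct σ (m := k) (j := j') (by omega) hkn hj1 hjn
    have hne := XS_ne_YS a b hdistinct σ (m := k) (j := j') (by omega) hkn hj1 hjn
    have hkj : k + j' - 1 = j' + k - 1 := by omega
    rw [hkj] at h2
    constructor
    · rintro ⟨hA, hB⟩
      refine ⟨h1.1 hB, ?_⟩
      by_contra hc
      push_neg at hc
      have := h2.2 hc
      linarith
    · rintro ⟨hA, hB⟩
      refine ⟨?_, h1.2 hA⟩
      have hnlt : ¬ (YS a b σ j' < XS a b σ k) := by
        intro h
        have := h2.1 h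
        omega
      exact lt_of_le_of_ne (not_lt.1 hnlt) hne
  have hfil : (Finset.univ.filter (fun σ : Fin n → Bool =>
      XS a b σ k < YS a b σ j' ∧ YS a b σ j' < XS a b σ i)) =
      (Finset.univ.filter (fun σ : Fin n → Bool =>
      i ≤ NC a b σ (i+j'-1) ∧ NC a b σ (j'+k-1) < k)) := by
    apply Finset.filter_congr
    intro σ _
    exact hiff σ
  rw [hfil]
  unfold Qn
  have hsplit : (Finset.univ.filter (fun σ : Fin n → Bool => i ≤ NC a b σ (i+j'-1))) =
      (Finset.univ.filter (fun σ : Fin n → Bool =>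
        i ≤ NC a b σ (i+j'-1) ∧ NC a b σ (j'+k-1) < k)) ∪
      (Finset.univ.filter (fun σ : Fin n → Bool => k ≤ NC a b σ (j'+k-1))) := by
    ext σ
    simp only [Finset.mem_filter, Finset.mem_univ, true_and, Finset.mem_union]
    have hd := NC_diff a b hdistinct σ (s := i+j'-1) (t := j'+k-1) (by omega) (by omega)
    have hts : j'+k-1 - (i+j'-1) = k - i := by omega
    rw [hts] at hd
    omega
  have hdisj : Disjoint
      (Finset.univ.filter (fun σ : Fin n → Bool =>
        i ≤ NC a b σ (i+j'-1) ∧ NC a b σ (j'+k-1) < k))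
      (Finset.univ.filter (fun σ : Fin n → Bool => k ≤ NC a b σ (j'+k-1))) := by
    rw [Finset.disjoint_left]
    intro σ h1 h2
    simp only [Finset.mem_filter, Finset.mem_univ, true_and] at h1 h2
    omega
  have := congrArg Finset.card hsplit
  rw [Finset.card_union_of_disjoint hdisj] at this
  omega

end Final

/-- Writing `F(i, j, k) = Pr(X^i > Y^j > X^k)`: for `1 ≤ i < j < k ≤ n`, if
`F(i, j−1, k) > F(i, j, k)` then `F(i, j, k) > F(i, j+1, k)`. -/
theorem F_unimodal_step
    (n : ℕ) (hn : 1 ≤ n) (a b : Fin n → ℝ)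
    (ha : ∀ i, 0 < a i) (hb : ∀ i, 0 < b i)
    (hdistinct : Function.Injective (Sum.elim a b : Fin n ⊕ Fin n → ℝ))
    (i j k : ℕ) (hi1 : 1 ≤ i) (hij : i < j) (hjk : j < k) (hkn : k ≤ n)
    (F : ℕ → ℕ → ℕ → ℝ)
    (hF : ∀ i' j' k', F i' j' k' =
      Pr (fun σ => XS a b σ k' < YS a b σ j' ∧ YS a b σ j' < XS a b σ i'))
    (hstep : F i (j - 1) k > F i j k) :
    F i j k > F i (j + 1) k := by
  have hik : i < k := lt_trans hij hjk
  -- event cardinalities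
  have hE0 := event_card a b hdistinct (i := i) (j' := j-1) (k := k) hi1 hik hkn
    (by omega) (by omega)
  have hE1 := event_card a b hdistinct (i := i) (j' := j) (k := k) hi1 hik hkn
    (by omega) (by omega)
  have hE2 := event_card a b hdistinct (i := i) (j' := j+1) (k := k) hi1 hik hkn
    (by omega) (by omega)
  set s := i + j - 1 with hs
  set t := j + k - 1 with ht
  have e1 : j - 1 + k - 1 = t - 1 := by omega
  have e2 : i + (j-1) - 1 = s - 1 := by omega
  have e3 : j + 1 + k - 1 = t + 1 := by omega
  have e4 : i + (j+1) - 1 = s + 1 := by omega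
  have e5 : i + j - 1 = s := rfl
  have e6 : j + k - 1 = t := rfl
  rw [e1, e2] at hE0
  rw [e3, e4] at hE2
  -- Q split equations
  have hQs : Qn a b i s = Qn a b i (s-1) + Dn a b i s := Q_split a b i s (by omega)
  have hQs1 : Qn a b i (s+1) = Qn a b i s + Dn a b i (s+1) := by
    have := Q_split a b i (s+1) (by omega)
    simpa using this
  have hQt : Qn a b k t = Qn a b k (t-1) + Dn a b k t := Q_split a b k t (by omega)
  have hQt1 : Qn a b k (t+1) = Qn a b k t + Dn a b k (t+1) := by
    have := Q_split a b k (t+1) (by omega)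
    simpa using this
  -- monotonicity lemmas
  have hM1 : Dn a b i (s+1) ≤ Dn a b i s :=
    M1 a b hdistinct (m := i) (p := s) hi1 (by omega) (by omega)
  have hM2 : Dn a b k t ≤ Dn a b k (t+1) :=
    M2 a b hdistinct (m := k) (p := t) (by omega) (by omega) (by omega) (by omega)
  -- translate hstep to naturals
  have h2n : (0:ℝ) < 2 ^ n := by positivity
  have hFcard : ∀ j' : ℕ, F i j' k =
      ((Finset.univ.filter (fun σ : Fin n → Bool =>
        XS a b σ k < YS a b σ j' ∧ YS a b σ j' < XS a b σ i)).card : ℝ) / 2 ^ n := by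
    intro j'
    rw [hF]
    unfold Pr
    exact congrArg (fun z : Finset (Fin n → Bool) => ((z.card : ℝ) / 2^n))
      (Finset.filter_congr_decidable _ _ _)
  have hstep' : (Finset.univ.filter (fun σ : Fin n → Bool =>
      XS a b σ k < YS a b σ (j-1) ∧ YS a b σ (j-1) < XS a b σ i)).card >
      (Finset.univ.filter (fun σ : Fin n → Bool =>
      XS a b σ k < YS a b σ j ∧ YS a b σ j < XS a b σ i)).card := by
    rw [hFcard (j-1), hFcard j] at hstep
    have := (div_lt_div_iff_of_pos_right h2n).1 hstep
    exact_mod_cast this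
  rw [hFcard j, hFcard (j+1)]
  apply div_lt_div_of_pos_right _ h2n
  have hgoal : (Finset.univ.filter (fun σ : Fin n → Bool =>
      XS a b σ k < YS a b σ (j+1) ∧ YS a b σ (j+1) < XS a b σ i)).card <
      (Finset.univ.filter (fun σ : Fin n → Bool =>
      XS a b σ k < YS a b σ j ∧ YS a b σ j < XS a b σ i)).card := by
    omega
  exact_mod_cast hgoal
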